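/- For any graph G with no isolated vertex and any noncomplete graph H, γ_r(G∘H) ≤ 4·γ(G). -/

import Mathlib

open Finset
open scoped Classical

/-- The lexicographic product of two simple graphs. -/
def lexProd {α β : Type*} (G : SimpleGraph α) (H : SimpleGraph β) :
    SimpleGraph (α × β) where
  Adj p q := G.Adj p.1 q.1 ∨ (p.1 = q.1 ∧ H.Adj p.2 q.2)
  symm := by
    constructor
    rintro ⟨a, b⟩ ⟨c, d⟩ (h | ⟨h1, h2⟩)
    · exact Or.inl h.symm
    · exact Or.inr ⟨h1.symm, h2.symm⟩
  loopless := by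
    constructor
    rintro ⟨a, b⟩ (h | ⟨h1, h2⟩)
    · exact G.loopless.irrefl a h
    · exact H.loopless.irrefl b h2

/-- A vertex `w` is undefended with respect to `g` if `g w = 0` and `g x = 0`
for every neighbour `x` of `w`. -/
def Undefended {α : Type*} (G : SimpleGraph α) (g : α → ℕ) (w : α) : Prop :=
  g w = 0 ∧ ∀ x, G.Adj w x → g x = 0

/-- A weak Roman dominating function. -/
def IsWRDF {α : Type*} (G : SimpleGraph α) (f : α → ℕ) : Prop :=
  (∀ v, f v ≤ 2) ∧
    ∀ v, f v = 0 → ∃ u, G.Adj u v ∧ 1 ≤ f u ∧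
      ∀ w, ¬ Undefended G (Function.update (Function.update f v 1) u (f u - 1)) w

/-- The weak Roman domination number. -/
noncomputable def weakRomanNumber {α : Type*} (G : SimpleGraph α) [Fintype α] : ℕ :=
  sInf {k | ∃ f : α → ℕ, IsWRDF G f ∧ ∑ v, f v = k}

/-- A dominating set. -/
def IsDomSet {α : Type*} (G : SimpleGraph α) (D : Finset α) : Prop :=
  ∀ v ∉ D, ∃ u ∈ D, G.Adj u v

/-- The domination number. -/
noncomputable def domNumber {α : Type*} (G : SimpleGraph α) [Fintype α] : ℕ :=
  sInf {k | ∃ D : Finset α, IsDomSet G D ∧ D.card = k}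

/-- A total dominating set. -/
def IsTotalDomSet {α : Type*} (G : SimpleGraph α) (S : Finset α) : Prop :=
  ∀ v, ∃ u ∈ S, G.Adj u v

/-- The total domination number. -/
noncomputable def totalDomNumber {α : Type*} (G : SimpleGraph α) [Fintype α] : ℕ :=
  sInf {k | ∃ S : Finset α, IsTotalDomSet G S ∧ S.card = k}

/-- A double total dominating set: every vertex has at least two neighbours in `S`. -/
def IsDoubleTotalDomSet {α : Type*} (G : SimpleGraph α) (S : Finset α) : Prop :=
  ∀ v, ∃ u₁ ∈ S, ∃ u₂ ∈ S, u₁ ≠ u₂ ∧ G.Adj u₁ v ∧ G.Adj u₂ v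

/-- The double total domination number. -/
noncomputable def doubleTotalDomNumber {α : Type*} (G : SimpleGraph α) [Fintype α] : ℕ :=
  sInf {k | ∃ S : Finset α, IsDoubleTotalDomSet G S ∧ S.card = k}

/-- A 2-packing: the closed neighbourhoods of distinct members are disjoint. -/
def IsTwoPacking {α : Type*} (G : SimpleGraph α) (X : Finset α) : Prop :=
  ∀ u ∈ X, ∀ v ∈ X, u ≠ v →
    ∀ w, ¬ ((w = u ∨ G.Adj u w) ∧ (w = v ∨ G.Adj v w))

/-- The 2-packing number. -/
noncomputable def twoPackingNumber {α : Type*} (G : SimpleGraph α) [Fintype α] : ℕ :=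
  sSup {k | ∃ X : Finset α, IsTwoPacking G X ∧ X.card = k}

/-- A secure dominating set. -/
def IsSecureDomSet {α : Type*} (G : SimpleGraph α) (S : Finset α) : Prop :=
  IsDomSet G S ∧ ∀ v ∉ S, ∃ u ∈ S, G.Adj u v ∧ IsDomSet G (insert v (S.erase u))

/-- The secure domination number. -/
noncomputable def secureDomNumber {α : Type*} (G : SimpleGraph α) [Fintype α] : ℕ :=
  sInf {k | ∃ S : Finset α, IsSecureDomSet G S ∧ S.card = k}

/-- The corona product of two graphs. -/
def corona {α β : Type*} (G₁ : SimpleGraph α) (G₂ : SimpleGraph β) :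
    SimpleGraph (α ⊕ α × β) where
  Adj x y :=
    match x, y with
    | .inl a, .inl a' => G₁.Adj a a'
    | .inl a, .inr p => a = p.1
    | .inr p, .inl a => p.1 = a
    | .inr p, .inr q => p.1 = q.1 ∧ G₂.Adj p.2 q.2
  symm := by
    constructor
    rintro (a | p) (a' | q) h
    · exact h.symm
    · exact h.symm
    · exact h.symm
    · exact ⟨h.1.symm, h.2.symm⟩
  loopless := by
    constructor
    rintro (a | p) h
    · exact G₁.loopless.irrefl a h
    · exact G₂.loopless.irrefl p.2 h.2


/-- For any graph `G` with no isolated vertex and any noncomplete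
graph `H`, `γ_r(G∘H) ≤ 4·γ(G)`. -/
theorem weakRoman_lexProd_le_four_mul_dom {α β : Type*} [Fintype α] [Fintype β]
    (G : SimpleGraph α) (H : SimpleGraph β)
    (hG : ∀ v : α, ∃ u, G.Adj v u)
    (hH : ∃ a b : β, a ≠ b ∧ ¬ H.Adj a b) :
    weakRomanNumber (lexProd G H) ≤ 4 * domNumber G := by
  classical
  obtain ⟨a, b, hab, hnadj⟩ := hH
  have hne : {k | ∃ D : Finset α, IsDomSet G D ∧ D.card = k}.Nonempty :=
    ⟨(univ : Finset α).card, univ, fun v hv => absurd (mem_univ v) hv, rfl⟩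
  obtain ⟨D, hD, hDcard⟩ := Nat.sInf_mem hne
  choose nbr hnbr using hG
  set S : Finset α := D ∪ D.image nbr with hS
  have hScard : S.card ≤ 2 * D.card := by
    calc S.card ≤ D.card + (D.image nbr).card := by exact card_union_le D (D.image nbr)
    _ ≤ D.card + D.card := by have : (D.image nbr).card ≤ D.card := card_image_le; omega
    _ = 2 * D.card := by ring
  have hStot : ∀ x : α, ∃ u ∈ S, G.Adj u x := by
    intro x
    by_cases hx : x ∈ D
    · exact ⟨nbr x, mem_union_right _ (mem_image_of_mem _ hx), (hnbr x).symm⟩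
    · obtain ⟨u, hu, hadj⟩ := hD x hx
      exact ⟨u, mem_union_left _ hu, hadj⟩
  set f : α × β → ℕ := fun p => if p.1 ∈ S ∧ (p.2 = a ∨ p.2 = b) then 1 else 0 with hf
  have hfle : ∀ p, f p ≤ 1 := by intro p; simp only [hf]; split <;> omega
  have hWRDF : IsWRDF (lexProd G H) f := by
    constructor
    · intro v; exact (hfle v).trans one_le_two
    · intro p hp
      obtain ⟨s, hsS, hsadj⟩ := hStot p.1
      refine ⟨(s, a), Or.inl hsadj, ?_, ?_⟩
      · simp [hf, hsS]
      · rintro w ⟨hw0, hwall⟩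
        obtain ⟨t, htS, htadj⟩ := hStot w.1
        have hadj : (lexProd G H).Adj w (t, b) := Or.inl htadj.symm
        have hz := hwall _ hadj
        have hne1 : (t, b) ≠ (s, a) := by
          intro h; exact hab (congrArg Prod.snd h).symm
        simp only [Function.update_apply, if_neg hne1] at hz
        by_cases hpt : (t, b) = p
        · rw [if_pos hpt] at hz; exact one_ne_zero hz
        · rw [if_neg hpt] at hz
          simp [hf, htS] at hz
  have hinner : ∀ x : α, x ∈ S →
      (∑ y : β, (if y = a ∨ y = b then (1 : ℕ) else 0)) = 2 := by
    intro x hx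
    have hsplit : ∀ y : β, (if y = a ∨ y = b then (1 : ℕ) else 0) =
        (if y = a then 1 else 0) + (if y = b then 1 else 0) := by
      intro y
      by_cases h1 : y = a <;> by_cases h2 : y = b
      · exact absurd (h1 ▸ h2) hab
      · simp [h1, h2, hab]
      · simp [h1, h2, Ne.symm hab]
      · simp [h1, h2]
    rw [Finset.sum_congr rfl (fun y _ => hsplit y), Finset.sum_add_distrib,
      Finset.sum_ite_eq' univ a (fun _ => (1 : ℕ)),
      Finset.sum_ite_eq' univ b (fun _ => (1 : ℕ))]
    simp
  have hsum : ∑ p, f p ≤ 4 * D.card := by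
    calc ∑ p, f p = ∑ x : α, ∑ y : β, f (x, y) := by rw [← Fintype.sum_prod_type]
    _ ≤ ∑ x : α, (if x ∈ S then 2 else 0) := by
        apply Finset.sum_le_sum
        intro x _
        by_cases hx : x ∈ S
        · simp only [hf, hx, true_and, if_pos hx]
          exact le_of_eq (hinner x hx)
        · simp [hf, hx]
    _ = ∑ x ∈ S, 2 := by
        rw [Finset.sum_ite_mem, Finset.univ_inter]
    _ = 2 * S.card := by rw [Finset.sum_const]; ring
    _ ≤ 2 * (2 * D.card) := by gcongr
    _ = 4 * D.card := by ring
  calc weakRomanNumber (lexProd G H) ≤ ∑ p, f p :=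
        Nat.sInf_le ⟨f, hWRDF, rfl⟩
  _ ≤ 4 * D.card := hsum
  _ = 4 * domNumber G := by rw [hDcard]; rfl
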